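/- Let T = (α β; β δ) ∈ P(ℤ) with D = det T > 0, and let z_T = (−β + i√D)/α ∈ ℍ be the associated point in the upper half-plane. Then for every γ ∈ SL₂(ℤ) with γ·z_T ≠ z_T (Möbius action), one has u(z_T, γ·z_T) ≥ min( 1/(4α²), 1/(4D) ). -/

import Mathlib

set_option maxHeartbeats 1000000 in
/-- lower bound `u(z_T, γ z_T) ≥ min(1/(4α²), 1/(4D))` for `γ ∈ SL₂(ℤ)`
not fixing the Heegner point `z_T` of `T = (α, B/2; B/2, δ) ∈ P(ℤ)`. -/
theorem stmt_13 (α δ B : ℤ) (hα : 0 < α) (D : ℝ)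
    (hD : D = (α:ℝ)*(δ:ℝ) - ((B:ℝ)/2)^2) (hDpos : 0 < D)
    (a b c d : ℤ) (hdet : a*d - b*c = 1) :
    let z : ℂ := (-((B:ℂ)/2) + (Real.sqrt D : ℝ) * Complex.I) / (α : ℂ)
    let w : ℂ := ((a : ℂ) * z + (b : ℂ)) / ((c : ℂ) * z + (d : ℂ))
    w ≠ z →
    min (1/(4*(α:ℝ)^2)) (1/(4*D)) ≤ ‖z - w‖^2 / (4 * z.im * w.im) := by
  intro z w hne
  have hαR : (0:ℝ) < (α:ℝ) := by exact_mod_cast hα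
  set s : ℝ := Real.sqrt D with hs
  have hspos : 0 < s := Real.sqrt_pos.mpr hDpos
  have hs2 : s ^ 2 = D := Real.sq_sqrt hDpos.le
  set x : ℝ := -((B:ℝ)/2)/α with hx
  set y : ℝ := s/α with hy
  have hypos : 0 < y := div_pos hspos hαR
  have hzre : z.re = x := by
    simp only [z, hx]
    rw [show ((α:ℤ):ℂ) = ((α:ℝ):ℂ) by push_cast; ring]
    simp [Complex.div_ofReal_re]
  have hzim : z.im = y := by
    simp only [z, hy]
    rw [show ((α:ℤ):ℂ) = ((α:ℝ):ℂ) by push_cast; ring]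
    simp [Complex.div_ofReal_im]; rfl
  have hy2 : y^2 * (α:ℝ)^2 = D := by
    rw [hy]; field_simp; exact hs2
  set t : ℂ := (c:ℂ)*z + (d:ℂ) with htdef
  have htre : t.re = (c:ℝ)*x + d := by
    simp [htdef, Complex.add_re, Complex.mul_re, hzre, hzim]
  have htim : t.im = (c:ℝ)*y := by
    simp [htdef, Complex.add_im, Complex.mul_im, hzre, hzim]
  have ht : t ≠ 0 := by
    intro h0
    have h1 : (c:ℝ)*y = 0 := by rw [← htim, h0]; simp
    have hc : (c:ℝ) = 0 := by
      rcases mul_eq_zero.mp h1 with h|h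
      · exact h
      · exact absurd h hypos.ne'
    have hc' : c = 0 := by exact_mod_cast hc
    have h2 : (c:ℝ)*x + d = 0 := by rw [← htre, h0]; simp
    have hd : (d:ℝ) = 0 := by rw [hc] at h2; linarith
    have hd' : d = 0 := by exact_mod_cast hd
    rw [hc', hd'] at hdet; simp at hdet
  set N : ℝ := Complex.normSq t with hN
  have hNpos : 0 < N := Complex.normSq_pos.mpr ht
  have hwim : w.im = y / N := by
    have : w = ((a:ℂ)*z + b)/t := rfl
    rw [this, Complex.div_im]
    have h1 : ((a:ℂ)*z + b).im = (a:ℝ)*y := by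
      simp [Complex.add_im, Complex.mul_im, hzre, hzim]
    have h2 : ((a:ℂ)*z + b).re = (a:ℝ)*x + b := by
      simp [Complex.add_re, Complex.mul_re, hzre, hzim]
    rw [h1, h2, htre, htim, ← hN]
    have hdetR : (a:ℝ)*d - b*c = 1 := by exact_mod_cast congrArg (Int.cast : ℤ → ℝ) hdet
    rw [div_sub_div_same]
    congr 1
    linear_combination y * hdetR
  set Q : ℂ := (c:ℂ)*z^2 + ((d:ℂ)-(a:ℂ))*z - b with hQdef
  have hzw : z - w = Q / t := by
    have hw : w = ((a:ℂ)*z + b)/t := rfl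
    rw [hw, hQdef]
    field_simp
    ring
  have hxa : x * (α:ℝ) = -((B:ℝ)/2) := by
    rw [hx]; field_simp
  have h1 : (α:ℂ)*z^2 + (B:ℂ)*z + (δ:ℂ) = 0 := by
    apply Complex.ext
    · simp [pow_two, Complex.add_re, Complex.mul_re, Complex.mul_im, hzre, hzim]
      have hαne' : (α:ℝ) ≠ 0 := hαR.ne'
      have hre0 : (α:ℝ) * ((α:ℝ)*(x*x - y*y) + (B:ℝ)*x + (δ:ℝ)) = 0 := by
        linear_combination (x*(α:ℝ) + (B:ℝ)/2)*hxa - hy2 - hD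
      exact (mul_eq_zero.mp hre0).resolve_left hαne'
    · simp [pow_two, Complex.add_im, Complex.mul_re, Complex.mul_im, hzre, hzim]
      linear_combination 2*y*hxa
  set P : ℤ := α*(d-a) - c*B with hPdef
  set R : ℤ := c*δ + α*b with hRdef
  have hQα : Q * (α:ℂ) = (P:ℂ)*z - (R:ℂ) := by
    rw [hQdef, hPdef, hRdef]
    push_cast
    linear_combination (c:ℂ)*h1
  have hnormQ : Complex.normSq Q * (α:ℝ)^2 = (((P:ℝ))*x - R)^2 + (((P:ℝ))*y)^2 := by
    have h2 := congrArg Complex.normSq hQα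
    rw [Complex.normSq_mul] at h2
    have h3 : Complex.normSq ((α:ℤ):ℂ) = (α:ℝ)^2 := by
      rw [show ((α:ℤ):ℂ) = ((α:ℝ):ℂ) by push_cast; ring, Complex.normSq_ofReal]; ring
    have h4 : ((P:ℂ)*z - (R:ℂ)).re = (P:ℝ)*x - R := by
      simp [Complex.sub_re, Complex.mul_re, hzre, hzim]
    have h5 : ((P:ℂ)*z - (R:ℂ)).im = (P:ℝ)*y := by
      simp [Complex.sub_im, Complex.mul_im, hzre, hzim]
    rw [h3] at h2
    rw [h2, Complex.normSq_apply, h4, h5]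
    ring
  have hyne : y ≠ 0 := hypos.ne'
  have hαne : (α:ℝ) ≠ 0 := hαR.ne'
  have key : ‖z - w‖^2 / (4 * z.im * w.im)
      = ((((P:ℝ))*x - R)^2 + (((P:ℝ))*y)^2) / (4*y^2*(α:ℝ)^2) := by
    rw [Complex.sq_norm, hzw, Complex.normSq_div, hzim, hwim, ← hN, ← hnormQ]
    field_simp
  rw [key]
  have h4D : 4*y^2*(α:ℝ)^2 = 4*D := by linarith [hy2]
  by_cases hP : P = 0
  · by_cases hR : R = 0
    · exfalso
      apply hne
      have hQ0 : Q = 0 := by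
        have : Q * (α:ℂ) = 0 := by rw [hQα, hP, hR]; simp
        have hαC : ((α:ℤ):ℂ) ≠ 0 := by
          simp only [ne_eq, Int.cast_eq_zero]; exact hα.ne'
        exact (mul_eq_zero.mp this).resolve_right hαC
      have : z - w = 0 := by rw [hzw, hQ0]; simp
      exact (sub_eq_zero.mp this).symm
    · have hR1 : (1:ℝ) ≤ ((R:ℝ))^2 := by
        have : (1:ℤ) ≤ R^2 := by
          rcases lt_or_gt_of_ne hR with h|h <;> nlinarith
        exact_mod_cast this
      rw [hP, h4D]
      push_cast
      have hmin : min (1/(4*(α:ℝ)^2)) (1/(4*D)) ≤ 1/(4*D) := min_le_right _ _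
      refine hmin.trans ?_
      rw [div_le_div_iff₀ (by positivity) (by positivity)]
      nlinarith [hDpos, hR1]
  · have hP1 : (1:ℝ) ≤ ((P:ℝ))^2 := by
      have : (1:ℤ) ≤ P^2 := by
        rcases lt_or_gt_of_ne hP with h|h <;> nlinarith
      exact_mod_cast this
    have hmin : min (1/(4*(α:ℝ)^2)) (1/(4*D)) ≤ 1/(4*(α:ℝ)^2) := min_le_left _ _
    refine hmin.trans ?_
    rw [div_le_div_iff₀ (by positivity) (by positivity)]
    nlinarith [sq_nonneg (((P:ℝ))*x - R), mul_nonneg (sub_nonneg.mpr hP1) (sq_nonneg (y*(α:ℝ))), sq_nonneg (y*(α:ℝ))]
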